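/- Let q be a prime. Work in the quaternion algebra H over the field ZMod q, with basis 1, i, j, k satisfying i² = j² = k² = −1, i·j = k = −j·i. Let A, B, C, D, x, y, z ∈ ZMod q and let λ ∈ ZMod q be a unit such that λ·(A + B·i + C·j + D·k) = (1 + x·i)·(1 + y·j)·(1 + z·k). Then (A·D − B·C)·z² + (A² + B² − C² − D²)·z + (B·C − A·D) = 0. -/

import Mathlib

open scoped Quaternion

/-- If `λ·(A + Bi + Cj + Dk) = (1 + xi)(1 + yj)(1 + zk)` in the
Hamilton quaternions over `ZMod q` with `λ` a unit, then `z` satisfies the quadratic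
equation `(AD − BC)z² + (A² + B² − C² − D²)z + (BC − AD) = 0`. -/
theorem quaternion_decomposition_necessary
    (q : ℕ) (hq : q.Prime) (A B C D x y z lam : ZMod q) (hlam : IsUnit lam)
    (h : lam • (⟨A, B, C, D⟩ : ℍ[ZMod q]) =
      (⟨1, x, 0, 0⟩ : ℍ[ZMod q]) * (⟨1, 0, y, 0⟩ : ℍ[ZMod q]) * (⟨1, 0, 0, z⟩ : ℍ[ZMod q])) :
    (A * D - B * C) * z ^ 2 + (A ^ 2 + B ^ 2 - C ^ 2 - D ^ 2) * z + (B * C - A * D) = 0 := by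
  haveI : Fact q.Prime := ⟨hq⟩
  rw [QuaternionAlgebra.ext_iff] at h
  simp at h
  obtain ⟨h1, h2, h3, h4⟩ := h
  have hne : lam ≠ 0 := hlam.ne_zero
  have key : lam ^ 2 * ((A * D - B * C) * z ^ 2 + (A ^ 2 + B ^ 2 - C ^ 2 - D ^ 2) * z +
      (B * C - A * D)) = lam ^ 2 * 0 := by
    linear_combination (z ^ 2 * lam * D + z * (lam * A + (1 - x * y * z)) - lam * D) * h1 +
      (-(z ^ 2) * lam * C + z * (lam * B + (x + y * z)) + lam * C) * h2 +
      (-(z ^ 2) * (x + y * z) - z * (lam * C + (-(x * z) + y)) + (x + y * z)) * h3 +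
      (z ^ 2 * (1 - x * y * z) - z * (lam * D + (z + x * y)) - (1 - x * y * z)) * h4
  exact mul_left_cancel₀ (pow_ne_zero 2 hne) key
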